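/- Let ψ : ℝ → (0,+∞) be an invertible non-increasing function with ψ(t) → +∞ as t → −∞, ψ(0) = 1, and ψ(t) → 0 as t → +∞. Suppose that for every a ∈ (0,1) there exists s_a > 0 such that ψ(s) ≤ (1/2)ψ(a·s) for all s ≥ s_a. Then for all s, t > 0, lim_{r→0⁺} G_r(s,t) = min(s,t), where G_r(s,t) = r·ψ⁻¹(ψ(s/r)+ψ(t/r)). -/

import Mathlib

open Filter Set

/-- If ψ satisfies (H_a) for every a ∈ (0,1), then for all s, t > 0,
lim_{r→0⁺} G_r(s,t) = min(s,t). -/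
theorem stmt_2 (ψ φ : ℝ → ℝ)
    (hpos : ∀ t, 0 < ψ t)
    (hanti : StrictAnti ψ)
    (hleft : ∀ t, φ (ψ t) = t)
    (hright : ∀ y, 0 < y → ψ (φ y) = y)
    (hbot : Tendsto ψ atBot atTop)
    (h0 : ψ 0 = 1)
    (htop : Tendsto ψ atTop (nhds 0))
    (Ha : ∀ a ∈ Ioo (0:ℝ) 1, ∃ sa > (0:ℝ), ∀ s ≥ sa, ψ s ≤ ψ (a * s) / 2) :
    ∀ s t : ℝ, 0 < s → 0 < t →
      Tendsto (fun r : ℝ => r * φ (ψ (s / r) + ψ (t / r)))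
        (nhdsWithin 0 (Ioi 0)) (nhds (min s t)) := by
  intro s t hs ht
  set m := min s t with hm
  have hm0 : 0 < m := lt_min hs ht
  have hphi : ∀ {y1 y2 : ℝ}, 0 < y1 → 0 < y2 → (φ y1 ≤ φ y2 ↔ y2 ≤ y1) := by
    intro y1 y2 h1 h2
    rw [← hanti.le_iff_ge, hright _ h1, hright _ h2]
  rw [tendsto_order]
  constructor
  · intro b hb
    set a : ℝ := (max b 0 + m) / (2 * m) with ha
    have hbm : max b 0 < m := max_lt hb hm0
    have ha0 : 0 < a := by
      apply div_pos _ (by linarith)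
      have := le_max_right b 0
      linarith
    have ha1 : a < 1 := by
      rw [ha, div_lt_one (by linarith)]
      linarith
    have ham : b < a * m := by
      have h1 : a * m = (max b 0 + m) / 2 := by
        rw [ha]; field_simp
      have := le_max_left b 0
      rw [h1]; linarith
    obtain ⟨sa, hsa0, hsa⟩ := Ha a ⟨ha0, ha1⟩
    filter_upwards [Ioo_mem_nhdsGT_of_mem (⟨le_refl 0, div_pos hm0 hsa0⟩ : (0:ℝ) ∈ Ico 0 (m / sa))] with r hr
    obtain ⟨hr0, hr1⟩ := hr
    have hmr : sa ≤ m / r := by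
      rw [le_div_iff₀ hr0]
      rw [lt_div_iff₀ hsa0] at hr1
      linarith
    have h1 : ψ (s / r) ≤ ψ (m / r) := hanti.antitone (by gcongr; exact min_le_left s t)
    have h2 : ψ (t / r) ≤ ψ (m / r) := hanti.antitone (by gcongr; exact min_le_right s t)
    have h3 : ψ (m / r) ≤ ψ (a * (m / r)) / 2 := hsa _ hmr
    have hsum : ψ (s / r) + ψ (t / r) ≤ ψ (a * m / r) := by
      have : a * (m / r) = a * m / r := by ring
      rw [← this]; linarith
    have hpsum : 0 < ψ (s / r) + ψ (t / r) := by
      have := hpos (s / r); have := hpos (t / r); linarith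
    have hle : a * m / r ≤ φ (ψ (s / r) + ψ (t / r)) := by
      have := (hphi (hpos (a * m / r)) hpsum).2 hsum
      rwa [hleft] at this
    calc b < a * m := ham
      _ = r * (a * m / r) := by field_simp
      _ ≤ r * φ (ψ (s / r) + ψ (t / r)) := by
          exact mul_le_mul_of_nonneg_left hle hr0.le
  · intro b hb
    filter_upwards [self_mem_nhdsWithin] with r hr0
    replace hr0 : (0:ℝ) < r := hr0
    have hsum : ψ (m / r) ≤ ψ (s / r) + ψ (t / r) := by
      rcases min_le_iff.mp (le_refl m) with h | h
      all_goals {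
        rcases le_total s t with hst | hst
        · have := hpos (t / r)
          have : ψ (m / r) = ψ (s / r) := by rw [hm, min_eq_left hst]
          have := hpos (t / r); linarith
        · have := hpos (s / r)
          have : ψ (m / r) = ψ (t / r) := by rw [hm, min_eq_right hst]
          have := hpos (s / r); linarith }
    have hpsum : 0 < ψ (s / r) + ψ (t / r) := by
      have := hpos (s / r); have := hpos (t / r); linarith
    have hle : φ (ψ (s / r) + ψ (t / r)) ≤ m / r := by
      have := (hphi hpsum (hpos (m / r))).2 hsum
      rwa [hleft] at this
    calc r * φ (ψ (s / r) + ψ (t / r)) ≤ r * (m / r) :=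
          mul_le_mul_of_nonneg_left hle hr0.le
      _ = m := by field_simp
      _ < b := hb
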